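/- Let n ≥ 1, let A be an n×n nonnegative real matrix with positive max-times spectral radius λ = λ(A), and let C be an n×n nonnegative real matrix such that max_{1≤k≤n} max_i (C^{⊗k})_{ii} ≤ 1. Then the minimum of max_{i,j} A_{ij} x_j / x_i over all positive vectors x ∈ ℝ_{>0}^n satisfying max_j C_{ij} x_j ≤ x_i for every i equals θ = max( λ, max_{1≤k≤n−1} max_{(i_1,…,i_k) ∈ ℕ^k, 1 ≤ i_1+⋯+i_k ≤ n−k} ( max_i (A ⊗ C^{⊗i_1} ⊗ A ⊗ C^{⊗i_2} ⊗ ⋯ ⊗ A ⊗ C^{⊗i_k})_{ii} )^{1/k} ), and this minimum is attained. -/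

import Mathlib

open scoped BigOperators

noncomputable section

/-- The max-times spectral radius (maximum geometric cycle mean) of a
nonnegative `n × n` real matrix. -/
def mtSpecRad {n : ℕ} (A : Matrix (Fin n) (Fin n) ℝ) : ℝ :=
  sSup { r : ℝ | ∃ (k : ℕ) (hk : 0 < k), k ≤ n ∧ ∃ f : Fin k → Fin n,
    r = (∏ t : Fin k, A (f t) (f ⟨((t : ℕ) + 1) % k, Nat.mod_lt _ hk⟩)) ^ ((k : ℝ)⁻¹) }

/-- The maximum cycle mean of a real `n × n` matrix (max-plus spectral radius). -/
def mpCycleMean {n : ℕ} (A : Matrix (Fin n) (Fin n) ℝ) : ℝ :=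
  sSup { r : ℝ | ∃ (k : ℕ) (hk : 0 < k), k ≤ n ∧ ∃ f : Fin k → Fin n,
    r = (∑ t : Fin k, A (f t) (f ⟨((t : ℕ) + 1) % k, Nat.mod_lt _ hk⟩)) / (k : ℝ) }

/-- Max-times matrix product. -/
def mtMul {n : ℕ} (A B : Matrix (Fin n) (Fin n) ℝ) : Matrix (Fin n) (Fin n) ℝ :=
  Matrix.of fun i j => ⨆ k : Fin n, A i k * B k j

/-- Max-times matrix powers, with `A^{⊗0} = I`. -/
def mtPow {n : ℕ} (A : Matrix (Fin n) (Fin n) ℝ) : ℕ → Matrix (Fin n) (Fin n) ℝ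
  | 0 => Matrix.of fun i j => if i = j then 1 else 0
  | (k + 1) => mtMul (mtPow A k) A

/-- Max-times Kleene star: entrywise maximum of `I, S, S^{⊗2}, …, S^{⊗(n-1)}`. -/
def mtStar {n : ℕ} (S : Matrix (Fin n) (Fin n) ℝ) : Matrix (Fin n) (Fin n) ℝ :=
  Matrix.of fun i j => ⨆ k : Fin n, mtPow S (k : ℕ) i j

/-- Max-times matrix-vector product. -/
def mtVecMul {n : ℕ} (S : Matrix (Fin n) (Fin n) ℝ) (u : Fin n → ℝ) : Fin n → ℝ :=
  fun i => ⨆ j, S i j * u j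

/-- Max-plus matrix product. -/
def mpMul {n : ℕ} (A B : Matrix (Fin n) (Fin n) ℝ) : Matrix (Fin n) (Fin n) ℝ :=
  Matrix.of fun i j => ⨆ k : Fin n, (A i k + B k j)

/-- `mpPow A k` is the max-plus power `A^{⊗(k+1)}`. -/
def mpPow {n : ℕ} (A : Matrix (Fin n) (Fin n) ℝ) : ℕ → Matrix (Fin n) (Fin n) ℝ
  | 0 => A
  | (k + 1) => mpMul (mpPow A k) A

/-- Max-plus Kleene star: `S^*_{ii} = max(0, max_{1≤k≤n-1} (S^{⊗k})_{ii})` and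
`S^*_{ij} = max_{1≤k≤n-1} (S^{⊗k})_{ij}` for `i ≠ j`. -/
def mpStar {n : ℕ} (S : Matrix (Fin n) (Fin n) ℝ) : Matrix (Fin n) (Fin n) ℝ :=
  Matrix.of fun i j =>
    if i = j then max 0 (⨆ k : Fin (n - 1), mpPow S (k : ℕ) i j)
    else ⨆ k : Fin (n - 1), mpPow S (k : ℕ) i j

/-- Max-plus matrix-vector product. -/
def mpVecMul {n : ℕ} (S : Matrix (Fin n) (Fin n) ℝ) (x : Fin n → ℝ) : Fin n → ℝ :=
  fun i => ⨆ j, (S i j + x j)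

/-- Chebyshev-like (max-times) distance between a nonnegative matrix `A` and the
rank-one reciprocal matrix with entries `x i / x j`. -/
def mtRho {n : ℕ} (A : Matrix (Fin n) (Fin n) ℝ) (x : Fin n → ℝ) : ℝ :=
  max (⨆ p : Fin n × Fin n, A p.1 p.2 * x p.2 / x p.1)
    (sSup { r : ℝ | ∃ i j, 0 < A i j ∧ r = x i / (A i j * x j) })

/-- The alternating max-times product `A ⊗ C^{⊗ i₁} ⊗ A ⊗ C^{⊗ i₂} ⊗ ⋯ ⊗ A ⊗ C^{⊗ i_k}`. -/
def mtChain {n : ℕ} (A C : Matrix (Fin n) (Fin n) ℝ) :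
    (k : ℕ) → (Fin k → ℕ) → Matrix (Fin n) (Fin n) ℝ
  | 0, _ => Matrix.of fun i j => if i = j then 1 else 0
  | (k + 1), f => mtMul (mtMul A (mtPow C (f 0))) (mtChain A C k (fun t => f t.succ))

/-- The optimal value `θ` of the constrained max-times approximation problem. -/
def mtTheta {n : ℕ} (A C : Matrix (Fin n) (Fin n) ℝ) : ℝ :=
  max (mtSpecRad A)
    (sSup { r : ℝ | ∃ k : ℕ, 0 < k ∧ k ≤ n - 1 ∧ ∃ f : Fin k → ℕ,
      1 ≤ ∑ t, f t ∧ (∑ t, f t) ≤ n - k ∧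
      r = (⨆ i, mtChain A C k f i i) ^ ((k : ℝ)⁻¹) })


section Aux

open Finset

variable {n : ℕ}

/-- Weight of a path of length `m` along `f`. -/
def ptW (S : Matrix (Fin n) (Fin n) ℝ) (f : ℕ → Fin n) (m : ℕ) : ℝ :=
  ∏ t ∈ Finset.range m, S (f t) (f (t + 1))

lemma ptW_zero (S : Matrix (Fin n) (Fin n) ℝ) (f : ℕ → Fin n) : ptW S f 0 = 1 := by
  simp [ptW]

lemma ptW_succ (S : Matrix (Fin n) (Fin n) ℝ) (f : ℕ → Fin n) (m : ℕ) :
    ptW S f (m + 1) = ptW S f m * S (f m) (f (m + 1)) := Finset.prod_range_succ _ _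

lemma ptW_nonneg {S : Matrix (Fin n) (Fin n) ℝ} (hS : ∀ i j, 0 ≤ S i j)
    (f : ℕ → Fin n) (m : ℕ) : 0 ≤ ptW S f m :=
  Finset.prod_nonneg fun _ _ => hS _ _

lemma le_mtMul [Nonempty (Fin n)] (M N : Matrix (Fin n) (Fin n) ℝ) (i j k : Fin n) :
    M i k * N k j ≤ mtMul M N i j := by
  show M i k * N k j ≤ ⨆ l, M i l * N l j
  exact le_ciSup (Set.Finite.bddAbove (Set.finite_range fun l => M i l * N l j)) k

lemma mtMul_le [Nonempty (Fin n)] {M N : Matrix (Fin n) (Fin n) ℝ} {i j : Fin n} {c : ℝ}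
    (h : ∀ k, M i k * N k j ≤ c) : mtMul M N i j ≤ c := ciSup_le h

lemma mtMul_nonneg [Nonempty (Fin n)] {M N : Matrix (Fin n) (Fin n) ℝ}
    (hM : ∀ i j, 0 ≤ M i j) (hN : ∀ i j, 0 ≤ N i j) : ∀ i j, 0 ≤ mtMul M N i j := by
  intro i j
  obtain ⟨k⟩ := (inferInstance : Nonempty (Fin n))
  exact le_trans (mul_nonneg (hM i k) (hN k j)) (le_mtMul M N i j k)

lemma mtPow_nonneg [Nonempty (Fin n)] {S : Matrix (Fin n) (Fin n) ℝ}
    (hS : ∀ i j, 0 ≤ S i j) : ∀ m i j, 0 ≤ mtPow S m i j := by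
  intro m
  induction m with
  | zero => intro i j; simp only [mtPow, Matrix.of_apply]; positivity
  | succ m ih => exact mtMul_nonneg ih hS

lemma mtChain_nonneg [Nonempty (Fin n)] {A C : Matrix (Fin n) (Fin n) ℝ}
    (hA : ∀ i j, 0 ≤ A i j) (hC : ∀ i j, 0 ≤ C i j) :
    ∀ k (g : Fin k → ℕ) i j, 0 ≤ mtChain A C k g i j := by
  intro k
  induction k with
  | zero => intro g i j; simp only [mtChain, Matrix.of_apply]; positivity
  | succ k ih =>
      intro g i j
      exact mtMul_nonneg (mtMul_nonneg hA (mtPow_nonneg hC (g 0))) (ih _) i j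

lemma ptW_le_mtPow [Nonempty (Fin n)] {S : Matrix (Fin n) (Fin n) ℝ}
    (hS : ∀ i j, 0 ≤ S i j) (f : ℕ → Fin n) :
    ∀ m, ptW S f m ≤ mtPow S m (f 0) (f m) := by
  intro m
  induction m with
  | zero => simp [ptW, mtPow]
  | succ m ih =>
      rw [ptW_succ]
      calc ptW S f m * S (f m) (f (m + 1))
          ≤ mtPow S m (f 0) (f m) * S (f m) (f (m + 1)) :=
            mul_le_mul_of_nonneg_right ih (hS _ _)
        _ ≤ mtPow S (m + 1) (f 0) (f (m + 1)) := le_mtMul _ _ _ _ _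

lemma mtPow_le_ptW [Nonempty (Fin n)] {S : Matrix (Fin n) (Fin n) ℝ}
    (hS : ∀ i j, 0 ≤ S i j) :
    ∀ m (i j : Fin n), ∃ f : ℕ → Fin n, f 0 = i ∧ f (m + 1) = j ∧
      mtPow S (m + 1) i j ≤ ptW S f (m + 1) := by
  intro m
  induction m with
  | zero =>
      intro i j
      refine ⟨fun t => if t = 0 then i else j, by simp, by simp, ?_⟩
      have h1 : ptW S (fun t => if t = 0 then i else j) 1 = S i j := by
        simp [ptW]
      rw [h1]
      refine mtMul_le fun k => ?_
      simp only [mtPow, Matrix.of_apply]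
      by_cases h : i = k
      · subst h; simp
      · simp [h, hS i j]
  | succ m ih =>
      intro i j
      obtain ⟨k₀, hk₀⟩ := Finite.exists_max (fun k : Fin n => mtPow S (m + 1) i k * S k j)
      obtain ⟨f, hf0, hfm, hfle⟩ := ih i k₀
      refine ⟨fun t => if t ≤ m + 1 then f t else j, by simp [hf0], by simp, ?_⟩
      have hedge : ptW S (fun t => if t ≤ m + 1 then f t else j) (m + 2)
          = ptW S f (m + 1) * S k₀ j := by
        rw [ptW_succ]
        congr 1
        · refine Finset.prod_congr rfl fun t ht => ?_
          simp only [Finset.mem_range] at ht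
          have h1 : t ≤ m + 1 := by omega
          have h2 : t + 1 ≤ m + 1 := by omega
          simp [h1, h2]
        · simp [hfm]
      rw [hedge]
      refine mtMul_le fun k => ?_
      calc mtPow S (m + 1) i k * S k j ≤ mtPow S (m + 1) i k₀ * S k₀ j := hk₀ k
        _ ≤ ptW S f (m + 1) * S k₀ j := mul_le_mul_of_nonneg_right hfle (hS _ _)

/-- Cycle removal: any path weight is dominated by the weight of a path of length
`≤ n - 1` with the same endpoints, provided all short cycles have weight `≤ 1`. -/
lemma ptW_remove_cycles (hn : 0 < n) {S : Matrix (Fin n) (Fin n) ℝ}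
    (hS : ∀ i j, 0 ≤ S i j)
    (hcyc : ∀ m (f : ℕ → Fin n), 1 ≤ m → m ≤ n → f m = f 0 → ptW S f m ≤ 1) :
    ∀ m (f : ℕ → Fin n), ∃ (m' : ℕ) (f' : ℕ → Fin n), m' ≤ n - 1 ∧ f' 0 = f 0 ∧
      f' m' = f m ∧ ptW S f m ≤ ptW S f' m' := by
  intro m
  induction m using Nat.strong_induction_on with
  | _ m IH =>
    intro f
    by_cases hm : m ≤ n - 1
    · exact ⟨m, f, hm, rfl, rfl, le_refl _⟩
    · have hmn : n ≤ m := by omega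
      -- pigeonhole on the first `n + 1` vertices
      obtain ⟨u, v, huv, hfe⟩ := Fintype.exists_ne_map_eq_of_card_lt
        (fun t : Fin (n + 1) => f t.val) (by simp)
      have key : ∀ (a b : ℕ), a < b → b ≤ n → f a = f b →
          ∃ (m' : ℕ) (f' : ℕ → Fin n), m' ≤ n - 1 ∧ f' 0 = f 0 ∧
            f' m' = f m ∧ ptW S f m ≤ ptW S f' m' := by
        intro a b hab hbn hfab
        set d := b - a with hd
        have hd1 : 1 ≤ d := by omega
        have hdb : a + d = b := by omega
        set g : ℕ → Fin n := fun t => if t < a then f t else f (t + d) with hg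
        have hE : ∀ t, S (g t) (g (t + 1)) =
            if t < a then S (f t) (f (t + 1)) else S (f (t + d)) (f (t + 1 + d)) := by
          intro t
          by_cases ht : t < a
          · by_cases ht1 : t + 1 < a
            · simp [hg, ht, ht1]
            · have hta : t + 1 = a := by omega
              have : f (t + 1 + d) = f (t + 1) := by rw [hta, hdb, ← hfab]
              simp [hg, ht, ht1, this]
          · have ht1 : ¬ (t + 1 < a) := by omega
            simp [hg, ht, ht1]
        have hfm : m = a + d + (m - b) := by omega
        have hsplit : ptW S f m =
            ptW S f a * (∏ t ∈ Finset.Ico a b, S (f t) (f (t + 1))) *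
              (∏ t ∈ Finset.Ico b m, S (f t) (f (t + 1))) := by
          unfold ptW
          rw [Finset.range_eq_Ico,
            ← Finset.prod_Ico_consecutive (fun t => S (f t) (f (t + 1)))
              (Nat.zero_le b) (le_trans hbn hmn),
            ← Finset.prod_Ico_consecutive (fun t => S (f t) (f (t + 1)))
              (Nat.zero_le a) (le_of_lt hab)]
          rw [Finset.range_eq_Ico]
        have hcycle : (∏ t ∈ Finset.Ico a b, S (f t) (f (t + 1))) ≤ 1 := by
          have := hcyc d (fun t => f (a + t)) hd1 (by omega)
            (by simp only [hdb, Nat.add_zero]; exact hfab.symm)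
          unfold ptW at this
          rw [Finset.prod_Ico_eq_prod_range]
          rw [show b - a = d from rfl]
          calc (∏ t ∈ Finset.range d, S (f (a + t)) (f (a + t + 1)))
              = ∏ t ∈ Finset.range d, S (f (a + t)) (f (a + (t + 1))) := by
                refine Finset.prod_congr rfl fun t _ => ?_; ring_nf
            _ ≤ 1 := this
        have hgsplit : ptW S g (m - d) =
            ptW S f a * (∏ t ∈ Finset.Ico b m, S (f t) (f (t + 1))) := by
          have ham : a ≤ m - d := by omega
          unfold ptW
          rw [Finset.range_eq_Ico,
            ← Finset.prod_Ico_consecutive (fun t => S (g t) (g (t + 1)))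
              (Nat.zero_le a) ham]
          congr 1
          ·
            refine Finset.prod_congr (by rw [Finset.range_eq_Ico]) fun t ht => ?_
            simp only [Finset.mem_range] at ht
            rw [hE t, if_pos ht]
          · rw [Finset.prod_Ico_eq_prod_range, Finset.prod_Ico_eq_prod_range]
            have hmm : m - d - a = m - b := by omega
            rw [hmm]
            refine Finset.prod_congr rfl fun t _ => ?_
            rw [hE (a + t), if_neg (by omega)]
            congr 2 <;> omega
        have hle : ptW S f m ≤ ptW S g (m - d) := by
          rw [hsplit, hgsplit]
          have h1 : 0 ≤ ptW S f a := ptW_nonneg hS f a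
          have h2 : 0 ≤ ∏ t ∈ Finset.Ico b m, S (f t) (f (t + 1)) :=
            Finset.prod_nonneg fun _ _ => hS _ _
          calc ptW S f a * (∏ t ∈ Finset.Ico a b, S (f t) (f (t + 1))) *
              (∏ t ∈ Finset.Ico b m, S (f t) (f (t + 1)))
              ≤ ptW S f a * 1 * (∏ t ∈ Finset.Ico b m, S (f t) (f (t + 1))) := by
                exact mul_le_mul_of_nonneg_right
                  (mul_le_mul_of_nonneg_left hcycle h1) h2
            _ = ptW S f a * (∏ t ∈ Finset.Ico b m, S (f t) (f (t + 1))) := by ring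
        obtain ⟨m', f', hm', hf0, hfm', hlef⟩ := IH (m - d) (by omega) g
        refine ⟨m', f', hm', ?_, ?_, le_trans hle hlef⟩
        · rw [hf0]
          by_cases h0 : 0 < a
          · simp [hg, h0]
          · have ha0 : a = 0 := by omega
            simp only [hg, ha0, Nat.lt_irrefl, if_neg (lt_irrefl 0), Nat.zero_add]
            rw [show d = b from by omega, ← hfab, ha0]
        · rw [hfm']
          have : ¬ (m - d < a) := by omega
          simp only [hg, this, if_false]
          congr 1
          omega
      have hvv : (u.val ≠ v.val) := fun h => huv (Fin.ext h)
      rcases lt_or_gt_of_ne hvv with hlt | hlt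
      · exact key u.val v.val hlt (by omega) hfe
      · exact key v.val u.val hlt (by omega) hfe.symm

/-- Existence of a positive sub-invariant vector for a matrix whose cycles all
have weight at most `1`. -/
lemma exists_subinvariant (hn : 0 < n) {S : Matrix (Fin n) (Fin n) ℝ}
    (hS : ∀ i j, 0 ≤ S i j)
    (hcyc : ∀ m (f : ℕ → Fin n), 1 ≤ m → m ≤ n → f m = f 0 → ptW S f m ≤ 1) :
    ∃ x : Fin n → ℝ, (∀ i, 0 < x i) ∧ (∀ i, (⨆ j, S i j * x j) ≤ x i) := by
  haveI : Nonempty (Fin n) := ⟨⟨0, hn⟩⟩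
  have hne : (Finset.univ : Finset (Fin n × Fin n)).Nonempty := Finset.univ_nonempty
  set x : Fin n → ℝ := fun i =>
    Finset.univ.sup' hne (fun p : Fin n × Fin n => mtPow S p.1 i p.2) with hx
  have hx1 : ∀ i, (1 : ℝ) ≤ x i := by
    intro i
    have : mtPow S ((⟨0, hn⟩ : Fin n) : ℕ) i i = 1 := by simp [mtPow]
    calc (1:ℝ) = mtPow S ((⟨0, hn⟩ : Fin n) : ℕ) i i := this.symm
      _ ≤ x i := Finset.le_sup' (fun p : Fin n × Fin n => mtPow S p.1 i p.2)
          (Finset.mem_univ ((⟨0, hn⟩ : Fin n), i))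
  have hptW : ∀ (f : ℕ → Fin n) m, ptW S f m ≤ x (f 0) := by
    intro f m
    obtain ⟨m', f', hm', hf0, _, hle⟩ := ptW_remove_cycles hn hS hcyc m f
    calc ptW S f m ≤ ptW S f' m' := hle
      _ ≤ mtPow S m' (f' 0) (f' m') := ptW_le_mtPow hS f' m'
      _ ≤ x (f' 0) := Finset.le_sup' (fun p : Fin n × Fin n => mtPow S p.1 (f' 0) p.2)
          (Finset.mem_univ ((⟨m', by omega⟩ : Fin n), f' m'))
      _ = x (f 0) := by rw [hf0]
  refine ⟨x, fun i => lt_of_lt_of_le one_pos (hx1 i), fun i => ciSup_le fun j => ?_⟩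
  obtain ⟨p, _, hp⟩ := Finset.exists_mem_eq_sup' hne
    (fun p : Fin n × Fin n => mtPow S p.1 i p.2)
  obtain ⟨q, _, hq⟩ := Finset.exists_mem_eq_sup' hne
    (fun p : Fin n × Fin n => mtPow S p.1 j p.2)
  have hxj : x j = mtPow S q.1 j q.2 := hq
  rcases Nat.eq_zero_or_eq_succ_pred (q.1 : ℕ) with h0 | hsucc
  · -- power 0 : the value is at most 1
    have hle1 : mtPow S (q.1 : ℕ) j q.2 ≤ 1 := by
      rw [h0]; simp only [mtPow, Matrix.of_apply]; split <;> norm_num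
    have : S i j * x j ≤ S i j := by
      rw [hxj]
      calc S i j * mtPow S (q.1:ℕ) j q.2 ≤ S i j * 1 :=
        mul_le_mul_of_nonneg_left hle1 (hS i j)
      _ = S i j := mul_one _
    refine le_trans this ?_
    have h1 : ptW S (fun t => if t = 0 then i else j) 1 = S i j := by
      unfold ptW; simp
    calc S i j = ptW S (fun t => if t = 0 then i else j) 1 := h1.symm
      _ ≤ x ((fun t : ℕ => if t = 0 then i else j) 0) := hptW _ 1
      _ = x i := by simp
  · set m := (q.1 : ℕ) - 1 with hm
    have hq1 : (q.1 : ℕ) = m + 1 := by omega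
    obtain ⟨g, hg0, hgm, hgle⟩ := mtPow_le_ptW hS m j q.2
    set h : ℕ → Fin n := fun t => if t = 0 then i else g (t - 1) with hh
    have hptWh : ptW S h (m + 2) = ptW S g (m + 1) * S i j := by
      unfold ptW
      rw [Finset.prod_range_succ']
      have e2 : S (h 0) (h (0 + 1)) = S i j := by simp [hh, hg0]
      have e1 : (∏ t ∈ Finset.range (m + 1), S (h (t + 1)) (h (t + 1 + 1)))
          = ∏ t ∈ Finset.range (m + 1), S (g t) (g (t + 1)) :=
        Finset.prod_congr rfl fun t _ => by
          have a1 : h (t + 1) = g t := by simp [hh]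
          have a2 : h (t + 1 + 1) = g (t + 1) := by simp [hh]
          rw [a1, a2]
      rw [e1, e2]
    have : S i j * x j ≤ ptW S h (m + 2) := by
      rw [hxj, hq1, hptWh, mul_comm]
      exact mul_le_mul_of_nonneg_right hgle (hS i j)
    refine le_trans this ?_
    have hh0 : h 0 = i := by simp [hh]
    rw [← hh0]
    exact hptW h (m + 2)

lemma rpow_inv_le {a b : ℝ} {k : ℕ} (hk : 0 < k) (ha : 0 ≤ a) (hb : 0 ≤ b)
    (h : a ≤ b ^ k) : a ^ ((k : ℝ)⁻¹) ≤ b := by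
  have hk0 : (k : ℝ) ≠ 0 := Nat.cast_ne_zero.mpr (Nat.pos_iff_ne_zero.mp hk)
  calc a ^ ((k : ℝ)⁻¹) ≤ (b ^ k) ^ ((k : ℝ)⁻¹) :=
        Real.rpow_le_rpow ha h (by positivity)
    _ = (b ^ (k : ℝ)) ^ ((k : ℝ)⁻¹) := by rw [Real.rpow_natCast]
    _ = b ^ ((k : ℝ) * (k : ℝ)⁻¹) := (Real.rpow_mul hb _ _).symm
    _ = b := by rw [mul_inv_cancel₀ hk0, Real.rpow_one]

lemma rpow_inv_pow {a : ℝ} {k : ℕ} (hk : 0 < k) (ha : 0 ≤ a) :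
    (a ^ ((k : ℝ)⁻¹)) ^ k = a := by
  have hk0 : (k : ℝ) ≠ 0 := Nat.cast_ne_zero.mpr (Nat.pos_iff_ne_zero.mp hk)
  calc (a ^ ((k : ℝ)⁻¹)) ^ k = (a ^ ((k : ℝ)⁻¹)) ^ (k : ℝ) := by
        rw [Real.rpow_natCast]
    _ = a ^ ((k : ℝ)⁻¹ * (k : ℝ)) := (Real.rpow_mul ha _ _).symm
    _ = a := by rw [inv_mul_cancel₀ hk0, Real.rpow_one]

lemma mtMul_bnd [Nonempty (Fin n)] {M N : Matrix (Fin n) (Fin n) ℝ} {x : Fin n → ℝ}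
    {c d : ℝ} (hM : ∀ i j, 0 ≤ M i j) (hd : 0 ≤ d) (hx : ∀ i, 0 < x i)
    (hMx : ∀ i j, M i j * x j ≤ c * x i) (hNx : ∀ i j, N i j * x j ≤ d * x i) :
    ∀ i j, mtMul M N i j * x j ≤ c * d * x i := by
  intro i j
  rw [← le_div_iff₀ (hx j)]
  refine mtMul_le fun k => ?_
  rw [le_div_iff₀ (hx j)]
  calc M i k * N k j * x j = M i k * (N k j * x j) := by ring
    _ ≤ M i k * (d * x k) := mul_le_mul_of_nonneg_left (hNx k j) (hM i k)
    _ = d * (M i k * x k) := by ring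
    _ ≤ d * (c * x i) := mul_le_mul_of_nonneg_left (hMx i k) hd
    _ = c * d * x i := by ring

lemma mtPow_bnd [Nonempty (Fin n)] {C : Matrix (Fin n) (Fin n) ℝ} {x : Fin n → ℝ}
    (hC : ∀ i j, 0 ≤ C i j) (hx : ∀ i, 0 < x i)
    (hxC : ∀ i j, C i j * x j ≤ x i) :
    ∀ m i j, mtPow C m i j * x j ≤ x i := by
  intro m
  induction m with
  | zero =>
      intro i j
      simp only [mtPow, Matrix.of_apply]
      by_cases h : i = j
      · subst h; simp
      · simp [h, le_of_lt (hx i)]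
  | succ m ih =>
      intro i j
      have := mtMul_bnd (M := mtPow C m) (N := C) (c := 1) (d := 1)
        (mtPow_nonneg hC m) zero_le_one hx
        (fun i j => by rw [one_mul]; exact ih i j)
        (fun i j => by rw [one_mul]; exact hxC i j) i j
      simpa [mtPow] using this

lemma mtChain_bnd [Nonempty (Fin n)] {A C : Matrix (Fin n) (Fin n) ℝ} {x : Fin n → ℝ}
    {μ : ℝ} (hA : ∀ i j, 0 ≤ A i j) (hC : ∀ i j, 0 ≤ C i j)
    (hx : ∀ i, 0 < x i) (hμ : 0 ≤ μ)
    (hxA : ∀ i j, A i j * x j ≤ μ * x i) (hxC : ∀ i j, C i j * x j ≤ x i) :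
    ∀ k (g : Fin k → ℕ) i j, mtChain A C k g i j * x j ≤ μ ^ k * x i := by
  intro k
  induction k with
  | zero =>
      intro g i j
      simp only [mtChain, Matrix.of_apply, pow_zero, one_mul]
      by_cases h : i = j
      · subst h; simp
      · simp [h, le_of_lt (hx i)]
  | succ k ih =>
      intro g i j
      have hinner : ∀ i j, mtMul A (mtPow C (g 0)) i j * x j ≤ μ * 1 * x i :=
        mtMul_bnd hA zero_le_one hx hxA (fun i j => by
          rw [one_mul]; exact mtPow_bnd hC hx hxC (g 0) i j)
      have houter := mtMul_bnd (mtMul_nonneg hA (mtPow_nonneg hC (g 0)))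
        (pow_nonneg hμ k) hx hinner (ih (fun t => g t.succ)) i j
      calc mtChain A C (k + 1) g i j * x j ≤ μ * 1 * μ ^ k * x i := houter
        _ = μ ^ (k + 1) * x i := by ring

lemma cycle_le_pow [Nonempty (Fin n)] {A : Matrix (Fin n) (Fin n) ℝ} {x : Fin n → ℝ}
    {μ : ℝ} (hA : ∀ i j, 0 ≤ A i j) (hx : ∀ i, 0 < x i)
    (hxA : ∀ i j, A i j * x j ≤ μ * x i)
    {k : ℕ} (hk : 0 < k) (f : Fin k → Fin n) :
    (∏ t : Fin k, A (f t) (f ⟨((t : ℕ) + 1) % k, Nat.mod_lt _ hk⟩)) ≤ μ ^ k := by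
  set nxt : Fin k → Fin k := fun t => ⟨((t : ℕ) + 1) % k, Nat.mod_lt _ hk⟩ with hnxt
  have hinj : Function.Injective nxt := by
    intro a b hab
    have ha := a.isLt
    have hb := b.isLt
    have hv : ((a : ℕ) + 1) % k = ((b : ℕ) + 1) % k := congrArg Fin.val hab
    have ha' : ((a : ℕ) + 1) % k = if (a : ℕ) + 1 = k then 0 else (a : ℕ) + 1 := by
      split
      · next h => rw [h, Nat.mod_self]
      · next h => exact Nat.mod_eq_of_lt (by omega)
    have hb' : ((b : ℕ) + 1) % k = if (b : ℕ) + 1 = k then 0 else (b : ℕ) + 1 := by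
      split
      · next h => rw [h, Nat.mod_self]
      · next h => exact Nat.mod_eq_of_lt (by omega)
    rw [ha', hb'] at hv
    apply Fin.ext
    split at hv <;> split at hv <;> omega
  have hbij : Function.Bijective nxt := Finite.injective_iff_bijective.mp hinj
  have hxprod : (∏ t : Fin k, x (f (nxt t))) = ∏ t : Fin k, x (f t) :=
    hbij.prod_comp fun t => x (f t)
  have hP : 0 < ∏ t : Fin k, x (f t) := Finset.prod_pos fun t _ => hx _
  have key : (∏ t : Fin k, A (f t) (f (nxt t))) * (∏ t : Fin k, x (f t))
      ≤ μ ^ k * ∏ t : Fin k, x (f t) := by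
    calc (∏ t : Fin k, A (f t) (f (nxt t))) * (∏ t : Fin k, x (f t))
        = (∏ t : Fin k, A (f t) (f (nxt t))) * ∏ t : Fin k, x (f (nxt t)) := by
          rw [hxprod]
      _ = ∏ t : Fin k, (A (f t) (f (nxt t)) * x (f (nxt t))) :=
          (Finset.prod_mul_distrib).symm
      _ ≤ ∏ t : Fin k, (μ * x (f t)) :=
          Finset.prod_le_prod (fun t _ => mul_nonneg (hA _ _) (le_of_lt (hx _)))
            (fun t _ => hxA _ _)
      _ = μ ^ k * ∏ t : Fin k, x (f t) := by
          rw [Finset.prod_mul_distrib, Finset.prod_const, Finset.card_univ,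
            Fintype.card_fin]
  exact le_of_mul_le_mul_right key hP

lemma set1_le (hn : 0 < n) {A : Matrix (Fin n) (Fin n) ℝ} {x : Fin n → ℝ}
    {μ : ℝ} (hA : ∀ i j, 0 ≤ A i j) (hx : ∀ i, 0 < x i) (hμ : 0 ≤ μ)
    (hxA : ∀ i j, A i j * x j ≤ μ * x i) :
    ∀ r ∈ { r : ℝ | ∃ (k : ℕ) (hk : 0 < k), k ≤ n ∧ ∃ f : Fin k → Fin n,
      r = (∏ t : Fin k, A (f t) (f ⟨((t : ℕ) + 1) % k, Nat.mod_lt _ hk⟩)) ^ ((k : ℝ)⁻¹) },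
      r ≤ μ := by
  haveI : Nonempty (Fin n) := ⟨⟨0, hn⟩⟩
  rintro r ⟨k, hk, -, f, rfl⟩
  exact rpow_inv_le hk (Finset.prod_nonneg fun t _ => hA _ _) hμ
    (cycle_le_pow hA hx hxA hk f)

lemma set2_le (hn : 0 < n) {A C : Matrix (Fin n) (Fin n) ℝ} {x : Fin n → ℝ}
    {μ : ℝ} (hA : ∀ i j, 0 ≤ A i j) (hC : ∀ i j, 0 ≤ C i j)
    (hx : ∀ i, 0 < x i) (hμ : 0 ≤ μ)
    (hxA : ∀ i j, A i j * x j ≤ μ * x i) (hxC : ∀ i j, C i j * x j ≤ x i) :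
    ∀ r ∈ { r : ℝ | ∃ k : ℕ, 0 < k ∧ k ≤ n - 1 ∧ ∃ f : Fin k → ℕ,
      1 ≤ ∑ t, f t ∧ (∑ t, f t) ≤ n - k ∧
      r = (⨆ i, mtChain A C k f i i) ^ ((k : ℝ)⁻¹) }, r ≤ μ := by
  haveI : Nonempty (Fin n) := ⟨⟨0, hn⟩⟩
  rintro r ⟨k, hk, -, f, -, -, rfl⟩
  have hsup : (⨆ i, mtChain A C k f i i) ≤ μ ^ k := by
    refine ciSup_le fun i => ?_
    exact le_of_mul_le_mul_right (mtChain_bnd hA hC hx hμ hxA hxC k f i i) (hx i)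
  refine rpow_inv_le hk ?_ hμ hsup
  exact le_ciSup_of_le (Set.Finite.bddAbove (Set.finite_range _))
    (Classical.arbitrary _) (mtChain_nonneg hA hC k f _ _)

lemma prod_max_choice (m : ℕ) (a b : ℕ → ℝ) :
    ∃ σ : ℕ → Bool, (∏ t ∈ Finset.range m, max (a t) (b t))
      = ∏ t ∈ Finset.range m, (if σ t then a t else b t) := by
  induction m with
  | zero => exact ⟨fun _ => true, by simp⟩
  | succ m ih =>
      obtain ⟨σ, hσ⟩ := ih
      by_cases h : b m ≤ a m
      · refine ⟨Function.update σ m true, ?_⟩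
        rw [Finset.prod_range_succ, Finset.prod_range_succ, hσ, max_eq_left h]
        congr 1
        · refine Finset.prod_congr rfl fun t ht => ?_
          rw [Function.update_of_ne (by simp only [Finset.mem_range] at ht; omega)]
        · simp
      · refine ⟨Function.update σ m false, ?_⟩
        rw [Finset.prod_range_succ, Finset.prod_range_succ, hσ,
          max_eq_right (le_of_not_ge h)]
        congr 1
        · refine Finset.prod_congr rfl fun t ht => ?_
          rw [Function.update_of_ne (by simp only [Finset.mem_range] at ht; omega)]
        · simp

lemma mtMul_id_le [Nonempty (Fin n)] {M : Matrix (Fin n) (Fin n) ℝ}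
    (hM : ∀ i j, 0 ≤ M i j) (i j : Fin n) :
    mtMul M (Matrix.of fun i j => if i = j then (1 : ℝ) else 0) i j ≤ M i j := by
  refine mtMul_le fun k => ?_
  simp only [Matrix.of_apply]
  by_cases h : k = j
  · subst h; simp
  · simp [h, hM i j]

/-- Decomposition of an alternating product along a path whose first step uses `A`. -/
lemma decomp [Nonempty (Fin n)] {A C : Matrix (Fin n) (Fin n) ℝ}
    (hA : ∀ i j, 0 ≤ A i j) (hC : ∀ i j, 0 ≤ C i j) :
    ∀ m, 1 ≤ m → ∀ (f : ℕ → Fin n) (σ : ℕ → Bool), σ 0 = true →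
    ∃ (k : ℕ) (g : Fin k → ℕ), 0 < k ∧ (k + ∑ t, g t = m) ∧
      k = ((Finset.range m).filter (fun t => σ t = true)).card ∧
      (∏ t ∈ Finset.range m, (if σ t then A (f t) (f (t + 1)) else C (f t) (f (t + 1))))
        ≤ mtChain A C k g (f 0) (f m) := by
  intro m
  induction m using Nat.strong_induction_on with
  | _ m IH =>
    intro hm f σ hσ0
    set E : ℕ → ℝ := fun t => if σ t then A (f t) (f (t + 1)) else C (f t) (f (t + 1))
      with hE
    have hEnn : ∀ t, 0 ≤ E t := by
      intro t; simp only [hE]; split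
      · exact hA _ _
      · exact hC _ _
    have hex : ∃ j, 1 ≤ j ∧ (j = m ∨ σ j = true) := ⟨m, by omega, Or.inl rfl⟩
    set j := Nat.find hex with hjdef
    obtain ⟨hj1, hjor⟩ := Nat.find_spec hex
    have hjle : j ≤ m := Nat.find_le ⟨by omega, Or.inl rfl⟩
    have hmin : ∀ t, 1 ≤ t → t < j → σ t = false ∧ t ≠ m := by
      intro t ht1 htj
      have := Nat.find_min hex htj
      push_neg at this
      obtain ⟨h1, h2⟩ := this ht1
      exact ⟨by simpa using h2, h1⟩
    have hsplit : (∏ t ∈ Finset.range m, E t) =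
        E 0 * (∏ t ∈ Finset.Ico 1 j, E t) * (∏ t ∈ Finset.Ico j m, E t) := by
      rw [Finset.range_eq_Ico,
        ← Finset.prod_Ico_consecutive E (Nat.zero_le j) hjle,
        ← Finset.prod_Ico_consecutive E (Nat.zero_le 1) hj1]
      congr 1
      rw [Finset.prod_Ico_eq_prod_range]
      simp
      exact Or.inl rfl
    have hE0 : E 0 = A (f 0) (f 1) := by simp [hE, hσ0]
    have hmid : (∏ t ∈ Finset.Ico 1 j, E t) ≤ mtPow C (j - 1) (f 1) (f j) := by
      have h1 : (∏ t ∈ Finset.Ico 1 j, E t) = ptW C (fun t => f (t + 1)) (j - 1) := by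
        rw [Finset.prod_Ico_eq_prod_range]
        unfold ptW
        refine Finset.prod_congr rfl fun t ht => ?_
        simp only [Finset.mem_range] at ht
        have hσt : σ (1 + t) = false := (hmin (1 + t) (by omega) (by omega)).1
        simp only [hE, hσt, Bool.false_eq_true, if_false]
        congr 2 <;> omega
      rw [h1]
      have h2 := ptW_le_mtPow hC (fun t => f (t + 1)) (j - 1)
      simpa [show j - 1 + 1 = j by omega] using h2
    rcases eq_or_lt_of_le hjle with hjm | hjm
    · -- j = m : a single block A ⬝ C^{m-1}
      refine ⟨1, fun _ => m - 1, one_pos, by simp; omega, ?_, ?_⟩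
      · have : (Finset.range m).filter (fun t => σ t = true) = {0} := by
          ext t
          simp only [Finset.mem_filter, Finset.mem_range, Finset.mem_singleton]
          constructor
          · rintro ⟨htm, hσt⟩
            by_contra h0
            have := (hmin t (by omega) (by omega)).1
            rw [this] at hσt
            exact absurd hσt (by simp)
          · rintro rfl
            exact ⟨by omega, hσ0⟩
        rw [this, Finset.card_singleton]
      · have hchain : mtChain A C 1 (fun _ => m - 1) =
            mtMul (mtMul A (mtPow C (m - 1))) (mtChain A C 0 (fun t => 0)) := by
          simp [mtChain]
        have hico : (∏ t ∈ Finset.Ico j m, E t) = 1 := by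
          rw [← hjm]; simp
        rw [hsplit, hico, mul_one, hE0, hchain]
        calc A (f 0) (f 1) * ∏ t ∈ Finset.Ico 1 j, E t
            ≤ A (f 0) (f 1) * mtPow C (j - 1) (f 1) (f j) :=
              mul_le_mul_of_nonneg_left hmid (hA _ _)
          _ ≤ mtMul A (mtPow C (j - 1)) (f 0) (f j) := le_mtMul _ _ _ _ _
          _ = mtMul A (mtPow C (m - 1)) (f 0) (f m) := by rw [hjm]
          _ = mtMul A (mtPow C (m - 1)) (f 0) (f m) *
                (Matrix.of fun i j => if i = j then (1:ℝ) else 0) (f m) (f m) := by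
              simp
          _ ≤ mtMul (mtMul A (mtPow C (m - 1)))
                (Matrix.of fun i j => if i = j then (1:ℝ) else 0) (f 0) (f m) :=
              le_mtMul _ _ _ _ _
          _ = mtMul (mtMul A (mtPow C (m - 1))) (mtChain A C 0 fun t => 0) (f 0) (f m) := by
              rfl
    · -- j < m : recurse on the tail
      have hσj : σ j = true := by
        rcases hjor with h | h
        · omega
        · exact h
      obtain ⟨k', g', hk', hsum', hcard', hbound'⟩ :=
        IH (m - j) (by omega) (by omega) (fun t => f (t + j)) (fun t => σ (t + j))
          (by simpa using hσj)
      have htail : (∏ t ∈ Finset.Ico j m, E t) =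
          ∏ t ∈ Finset.range (m - j),
            (if σ (t + j) then A (f (t + j)) (f (t + 1 + j))
              else C (f (t + j)) (f (t + 1 + j))) := by
        rw [Finset.prod_Ico_eq_prod_range]
        refine Finset.prod_congr rfl fun t _ => ?_
        simp only [hE]
        have h2 : j + t + 1 = t + 1 + j := by omega
        have h1 : j + t = t + j := by omega
        rw [h2, h1]
      refine ⟨k' + 1, Fin.cons (j - 1) g', Nat.succ_pos _, ?_, ?_, ?_⟩
      · rw [Fin.sum_cons]
        omega
      · -- cardinality
        have himg : ((Finset.range (m - j)).filter
              (fun t => σ (t + j) = true)).image (· + j)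
            = (Finset.Ico j m).filter (fun t => σ t = true) := by
          ext t
          simp only [Finset.mem_image, Finset.mem_filter, Finset.mem_range,
            Finset.mem_Ico]
          constructor
          · rintro ⟨s, ⟨hs, hσs⟩, rfl⟩
            exact ⟨⟨by omega, by omega⟩, hσs⟩
          · rintro ⟨⟨hjt, htm⟩, hσt⟩
            exact ⟨t - j, ⟨by omega, by rw [show t - j + j = t by omega]; exact hσt⟩,
              by omega⟩
        have hins : (Finset.range m).filter (fun t => σ t = true) =
            insert 0 ((Finset.Ico j m).filter (fun t => σ t = true)) := by
          ext t
          simp only [Finset.mem_filter, Finset.mem_range, Finset.mem_insert,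
            Finset.mem_Ico]
          constructor
          · rintro ⟨htm, hσt⟩
            by_cases h0 : t = 0
            · exact Or.inl h0
            · right
              refine ⟨⟨?_, htm⟩, hσt⟩
              by_contra htj
              have := (hmin t (by omega) (by omega)).1
              rw [this] at hσt
              exact absurd hσt (by simp)
          · rintro (rfl | ⟨⟨hjt, htm⟩, hσt⟩)
            · exact ⟨by omega, hσ0⟩
            · exact ⟨htm, hσt⟩
        rw [hins, Finset.card_insert_of_notMem (by
          simp only [Finset.mem_filter, Finset.mem_Ico]
          rintro ⟨⟨h, -⟩, -⟩
          omega), ← himg,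
          Finset.card_image_of_injective _ (add_left_injective j)]
        omega
      · -- the bound
        have hchain : mtChain A C (k' + 1) (Fin.cons (j - 1) g') =
            mtMul (mtMul A (mtPow C (j - 1))) (mtChain A C k' g') := by
          have harg : (fun t : Fin k' => (Fin.cons (j - 1) g' : Fin (k' + 1) → ℕ) t.succ) = g' :=
            funext fun t => Fin.cons_succ (α := fun _ => ℕ) (j - 1) g' t
          simp only [mtChain, Fin.cons_zero, harg]
        have hb' : (∏ t ∈ Finset.Ico j m, E t) ≤ mtChain A C k' g' (f j) (f m) := by
          rw [htail]
          have : f (m - j + j) = f m := by rw [show m - j + j = m by omega]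
          have hj0 : f (0 + j) = f j := by rw [Nat.zero_add]
          calc (∏ t ∈ Finset.range (m - j),
              if σ (t + j) then A (f (t + j)) (f (t + 1 + j))
                else C (f (t + j)) (f (t + 1 + j)))
              ≤ mtChain A C k' g' (f (0 + j)) (f (m - j + j)) := hbound'
            _ = mtChain A C k' g' (f j) (f m) := by rw [hj0, this]
        rw [hsplit, hE0, hchain]
        have hnn1 : 0 ≤ ∏ t ∈ Finset.Ico j m, E t :=
          Finset.prod_nonneg fun t _ => hEnn t
        have hnn2 : 0 ≤ A (f 0) (f 1) * ∏ t ∈ Finset.Ico 1 j, E t :=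
          mul_nonneg (hA _ _) (Finset.prod_nonneg fun t _ => hEnn t)
        calc A (f 0) (f 1) * (∏ t ∈ Finset.Ico 1 j, E t) * (∏ t ∈ Finset.Ico j m, E t)
            ≤ A (f 0) (f 1) * mtPow C (j - 1) (f 1) (f j) *
                (∏ t ∈ Finset.Ico j m, E t) := by
              exact mul_le_mul_of_nonneg_right
                (mul_le_mul_of_nonneg_left hmid (hA _ _)) hnn1
          _ ≤ mtMul A (mtPow C (j - 1)) (f 0) (f j) * (∏ t ∈ Finset.Ico j m, E t) :=
              mul_le_mul_of_nonneg_right (le_mtMul _ _ _ _ _) hnn1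
          _ ≤ mtMul A (mtPow C (j - 1)) (f 0) (f j) * mtChain A C k' g' (f j) (f m) := by
              refine mul_le_mul_of_nonneg_left hb' ?_
              exact le_trans (mul_nonneg (hA (f 0) (f 1))
                (mtPow_nonneg hC (j - 1) (f 1) (f j))) (le_mtMul _ _ _ _ _)
          _ ≤ mtMul (mtMul A (mtPow C (j - 1))) (mtChain A C k' g') (f 0) (f m) :=
              le_mtMul _ _ _ _ _

/-- A chain with all-zero exponents is dominated by a pure `A`-path. -/
lemma chain_zero_path [Nonempty (Fin n)] {A C : Matrix (Fin n) (Fin n) ℝ}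
    (hA : ∀ i j, 0 ≤ A i j) (hC : ∀ i j, 0 ≤ C i j) :
    ∀ k, 0 < k → ∀ (g : Fin k → ℕ), (∀ t, g t = 0) → ∀ i j : Fin n,
      ∃ f : ℕ → Fin n, f 0 = i ∧ f k = j ∧ mtChain A C k g i j ≤ ptW A f k := by
  intro k
  induction k with
  | zero => omega
  | succ k ihk =>
      intro _ g hg i j
      have hACI : ∀ i l, mtMul A (mtPow C (g 0)) i l ≤ A i l := by
        intro i l
        have : mtPow C (g 0) = Matrix.of fun i j => if i = j then (1:ℝ) else 0 := by
          rw [hg 0]; rfl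
        rw [this]
        exact mtMul_id_le hA i l
      rcases Nat.eq_zero_or_pos k with hk0 | hkpos
      · subst hk0
        refine ⟨fun t => if t = 0 then i else j, by simp, by simp, ?_⟩
        have hptW1 : ptW A (fun t => if t = 0 then i else j) 1 = A i j := by
          unfold ptW; simp
        rw [hptW1]
        show mtMul (mtMul A (mtPow C (g 0))) (mtChain A C 0 fun t => g t.succ) i j ≤ A i j
        refine mtMul_le fun l => ?_
        simp only [mtChain, Matrix.of_apply]
        by_cases h : l = j
        · subst h
          simpa using hACI i l
        · simp [h, hA i j]
      · obtain ⟨l₀, hl₀⟩ := Finite.exists_max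
          (fun l : Fin n => mtMul A (mtPow C (g 0)) i l *
            mtChain A C k (fun t => g t.succ) l j)
        obtain ⟨f', hf'0, hf'k, hf'le⟩ := ihk hkpos (fun t => g t.succ)
          (fun t => hg t.succ) l₀ j
        refine ⟨fun t => if t = 0 then i else f' (t - 1), by simp, by simp [hf'k], ?_⟩
        have hptW : ptW A (fun t => if t = 0 then i else f' (t - 1)) (k + 1)
            = ptW A f' k * A i (f' 0) := by
          unfold ptW
          rw [Finset.prod_range_succ']
          simp
        rw [hptW]
        show mtMul (mtMul A (mtPow C (g 0))) (mtChain A C k fun t => g t.succ) i j ≤ _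
        refine mtMul_le fun l => ?_
        calc mtMul A (mtPow C (g 0)) i l * mtChain A C k (fun t => g t.succ) l j
            ≤ mtMul A (mtPow C (g 0)) i l₀ * mtChain A C k (fun t => g t.succ) l₀ j :=
              hl₀ l
          _ ≤ A i l₀ * mtChain A C k (fun t => g t.succ) l₀ j :=
              mul_le_mul_of_nonneg_right (hACI i l₀)
                (mtChain_nonneg hA hC k _ l₀ j)
          _ ≤ A i l₀ * ptW A f' k :=
              mul_le_mul_of_nonneg_left hf'le (hA i l₀)
          _ = ptW A f' k * A i (f' 0) := by rw [hf'0, mul_comm]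

end Aux

/-- The minimum of `max_{i,j} A_{ij} x_j / x_i` over positive vectors `x`
satisfying `C ⊗ x ≤ x` equals `θ`, and it is attained. -/
theorem mt_constrained_min {n : ℕ} (hn : 1 ≤ n) (A C : Matrix (Fin n) (Fin n) ℝ)
    (hA : ∀ i j, 0 ≤ A i j) (hC : ∀ i j, 0 ≤ C i j)
    (hlam : 0 < mtSpecRad A)
    (hTr : ∀ k : ℕ, 1 ≤ k → k ≤ n → ∀ i, mtPow C k i i ≤ 1) :
    IsLeast { y : ℝ | ∃ x : Fin n → ℝ, (∀ i, 0 < x i) ∧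
        (∀ i, (⨆ j, C i j * x j) ≤ x i) ∧
        y = ⨆ p : Fin n × Fin n, A p.1 p.2 * x p.2 / x p.1 }
      (mtTheta A C) := by
  have hn0 : 0 < n := hn
  haveI : Nonempty (Fin n) := ⟨⟨0, hn⟩⟩
  set μf : (Fin n → ℝ) → ℝ := fun x => ⨆ p : Fin n × Fin n, A p.1 p.2 * x p.2 / x p.1
    with hμf
  have hfeas : ∀ x : Fin n → ℝ, (∀ i, 0 < x i) → (∀ i, (⨆ j, C i j * x j) ≤ x i) →
      0 ≤ μf x ∧ (∀ i j, A i j * x j ≤ μf x * x i) ∧ (∀ i j, C i j * x j ≤ x i) := by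
    intro x hx hxC
    have hxC' : ∀ i j, C i j * x j ≤ x i := fun i j =>
      le_trans (le_ciSup (Set.Finite.bddAbove
        (Set.finite_range fun j => C i j * x j)) j) (hxC i)
    have hA' : ∀ i j, A i j * x j / x i ≤ μf x := fun i j =>
      le_ciSup (Set.Finite.bddAbove (Set.finite_range
        fun p : Fin n × Fin n => A p.1 p.2 * x p.2 / x p.1)) (i, j)
    have hμ0 : 0 ≤ μf x := by
      obtain ⟨i⟩ := (inferInstance : Nonempty (Fin n))
      refine le_trans ?_ (hA' i i)
      have := hA i i
      have := (hx i).le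
      positivity
    refine ⟨hμ0, fun i j => ?_, hxC'⟩
    have := hA' i j
    rw [div_le_iff₀ (hx i)] at this
    linarith
  have hcycC : ∀ m (f : ℕ → Fin n), 1 ≤ m → m ≤ n → f m = f 0 → ptW C f m ≤ 1 := by
    intro m f hm1 hmn hfc
    calc ptW C f m ≤ mtPow C m (f 0) (f m) := ptW_le_mtPow hC f m
      _ = mtPow C m (f 0) (f 0) := by rw [hfc]
      _ ≤ 1 := hTr m hm1 hmn (f 0)
  obtain ⟨x₀, hx₀, hx₀C⟩ := exists_subinvariant hn0 hC hcycC
  obtain ⟨hμ₀0, hx₀A, hx₀C'⟩ := hfeas x₀ hx₀ hx₀C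
  set s1 : Set ℝ := { r : ℝ | ∃ (k : ℕ) (hk : 0 < k), k ≤ n ∧ ∃ f : Fin k → Fin n,
    r = (∏ t : Fin k, A (f t) (f ⟨((t : ℕ) + 1) % k, Nat.mod_lt _ hk⟩)) ^ ((k : ℝ)⁻¹) }
    with hs1
  set s2 : Set ℝ := { r : ℝ | ∃ k : ℕ, 0 < k ∧ k ≤ n - 1 ∧ ∃ f : Fin k → ℕ,
    1 ≤ ∑ t, f t ∧ (∑ t, f t) ≤ n - k ∧
    r = (⨆ i, mtChain A C k f i i) ^ ((k : ℝ)⁻¹) } with hs2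
  have hbdd1 : BddAbove s1 := ⟨μf x₀, fun r hr => set1_le hn0 hA hx₀ hμ₀0 hx₀A r hr⟩
  have hbdd2 : BddAbove s2 :=
    ⟨μf x₀, fun r hr => set2_le hn0 hA hC hx₀ hμ₀0 hx₀A hx₀C' r hr⟩
  have hspec : mtSpecRad A = sSup s1 := rfl
  have htheta : mtTheta A C = max (mtSpecRad A) (sSup s2) := rfl
  set θ := mtTheta A C with hθ
  have hθpos : 0 < θ := lt_of_lt_of_le hlam (by rw [htheta, hspec]; exact le_max_left _ _)
  have hθ0 : (0:ℝ) ≤ θ := le_of_lt hθpos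
  have hθne : θ ≠ 0 := ne_of_gt hθpos
  have hLB : ∀ x : Fin n → ℝ, (∀ i, 0 < x i) → (∀ i, (⨆ j, C i j * x j) ≤ x i) →
      θ ≤ μf x := by
    intro x hx hxC
    obtain ⟨hμ0, hxA, hxC'⟩ := hfeas x hx hxC
    rw [htheta, hspec]
    exact max_le (Real.sSup_le (set1_le hn0 hA hx hμ0 hxA) hμ0)
      (Real.sSup_le (set2_le hn0 hA hC hx hμ0 hxA hxC') hμ0)
  -- the shifted matrix
  set S : Matrix (Fin n) (Fin n) ℝ := Matrix.of fun i j => max (A i j / θ) (C i j)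
    with hSdef
  have hS : ∀ i j, 0 ≤ S i j := fun i j => le_trans (hC i j) (le_max_right _ _)
  -- diagonal chain bound
  have hchainle : ∀ (k : ℕ), 0 < k → ∀ (g : Fin k → ℕ), k + ∑ t, g t ≤ n →
      ∀ i : Fin n, mtChain A C k g i i ≤ θ ^ k := by
    intro k hk g hkn i
    rcases Nat.eq_zero_or_pos (∑ t, g t) with hsg | hsg
    · have hg0 : ∀ t, g t = 0 := fun t =>
        (Finset.sum_eq_zero_iff.mp hsg) t (Finset.mem_univ t)
      obtain ⟨fz, hfz0, hfzk, hfzle⟩ := chain_zero_path hA hC k hk g hg0 i i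
      set F : Fin k → Fin n := fun t => fz t.val with hF
      have hprodeq : ptW A fz k
          = ∏ t : Fin k, A (F t) (F ⟨((t : ℕ) + 1) % k, Nat.mod_lt _ hk⟩) := by
        unfold ptW
        rw [← Fin.prod_univ_eq_prod_range (fun t => A (fz t) (fz (t + 1))) k]
        refine Finset.prod_congr rfl fun t _ => ?_
        congr 1
        show fz ((t : ℕ) + 1) = fz (((t : ℕ) + 1) % k)
        rcases eq_or_lt_of_le (Nat.succ_le_of_lt t.isLt) with h | h
        · have h' : (t : ℕ) + 1 = k := h
          rw [h', Nat.mod_self, hfzk, hfz0]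
        · rw [Nat.mod_eq_of_lt h]
      have hprodnn : 0 ≤ ∏ t : Fin k,
          A (F t) (F ⟨((t : ℕ) + 1) % k, Nat.mod_lt _ hk⟩) :=
        Finset.prod_nonneg fun t _ => hA _ _
      have hr : (∏ t : Fin k,
          A (F t) (F ⟨((t : ℕ) + 1) % k, Nat.mod_lt _ hk⟩)) ^ ((k : ℝ)⁻¹) ∈ s1 :=
        ⟨k, hk, by omega, F, rfl⟩
      have h1 : sSup s1 ≤ θ := by
        rw [htheta, hspec]; exact le_max_left _ _
      calc mtChain A C k g i i ≤ ptW A fz k := hfzle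
        _ = ∏ t : Fin k, A (F t) (F ⟨((t : ℕ) + 1) % k, Nat.mod_lt _ hk⟩) := hprodeq
        _ = ((∏ t : Fin k,
              A (F t) (F ⟨((t : ℕ) + 1) % k, Nat.mod_lt _ hk⟩)) ^ ((k : ℝ)⁻¹)) ^ k :=
            (rpow_inv_pow hk hprodnn).symm
        _ ≤ θ ^ k := pow_le_pow_left₀ (Real.rpow_nonneg hprodnn _)
            (le_trans (le_csSup hbdd1 hr) h1) k
    · have hbddc : BddAbove (Set.range fun i' => mtChain A C k g i' i') :=
        Set.Finite.bddAbove (Set.finite_range _)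
      have hsup_nn : 0 ≤ ⨆ i', mtChain A C k g i' i' :=
        le_ciSup_of_le hbddc i (mtChain_nonneg hA hC k g i i)
      have hr : (⨆ i', mtChain A C k g i' i') ^ ((k : ℝ)⁻¹) ∈ s2 :=
        ⟨k, hk, by omega, g, hsg, by omega, rfl⟩
      have h2 : sSup s2 ≤ θ := by rw [htheta]; exact le_max_right _ _
      calc mtChain A C k g i i ≤ ⨆ i', mtChain A C k g i' i' := le_ciSup hbddc i
        _ = (((⨆ i', mtChain A C k g i' i') ^ ((k : ℝ)⁻¹))) ^ k :=
            (rpow_inv_pow hk hsup_nn).symm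
        _ ≤ θ ^ k := pow_le_pow_left₀ (Real.rpow_nonneg hsup_nn _)
            (le_trans (le_csSup hbdd2 hr) h2) k
  -- all cycles of S have weight at most one
  have hcycS : ∀ m (f : ℕ → Fin n), 1 ≤ m → m ≤ n → f m = f 0 → ptW S f m ≤ 1 := by
    intro m f hm1 hmn hfc
    obtain ⟨σ, hσ⟩ := prod_max_choice m (fun t => A (f t) (f (t + 1)) / θ)
      (fun t => C (f t) (f (t + 1)))
    have hptWS : ptW S f m = ∏ t ∈ Finset.range m,
        (if σ t then A (f t) (f (t + 1)) / θ else C (f t) (f (t + 1))) := by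
      rw [← hσ]
      unfold ptW
      exact Finset.prod_congr rfl fun t _ => rfl
    by_cases hall : ∀ t, t < m → σ t = false
    · have heq : ptW S f m = ptW C f m := by
        rw [hptWS]
        unfold ptW
        refine Finset.prod_congr rfl fun t ht => ?_
        rw [hall t (Finset.mem_range.mp ht)]
        simp
      rw [heq]
      exact hcycC m f hm1 hmn hfc
    · push_neg at hall
      obtain ⟨t₀, ht₀m, ht₀⟩ := hall
      have ht₀' : σ t₀ = true := by
        cases h : σ t₀
        · exact absurd h ht₀
        · rfl
      have hm0 : 0 < m := hm1
      set f' : ℕ → Fin n := fun t => f ((t + t₀) % m) with hf'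
      set σ' : ℕ → Bool := fun t => σ ((t + t₀) % m) with hσ'
      have hσ'0 : σ' 0 = true := by
        simp only [hσ', Nat.zero_add, Nat.mod_eq_of_lt ht₀m]
        exact ht₀'
      have hf'm : f' m = f' 0 := by
        simp only [hf', Nat.zero_add, Nat.add_mod_left]
      have hnext : ∀ t, f ((t + 1 + t₀) % m) = f ((t + t₀) % m + 1) := by
        intro t
        have hsm : (t + t₀) % m < m := Nat.mod_lt _ hm0
        have hmod : (t + 1 + t₀) % m = ((t + t₀) % m + 1) % m := by
          rw [Nat.mod_add_mod]
          congr 1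
          omega
        rcases eq_or_lt_of_le (Nat.succ_le_of_lt hsm) with h | h
        · have h' : (t + t₀) % m + 1 = m := h
          rw [hmod, h', Nat.mod_self, hfc]
        · rw [hmod, Nat.mod_eq_of_lt h]
      have hrot : (∏ t ∈ Finset.range m, (if σ' t then A (f' t) (f' (t + 1)) / θ
            else C (f' t) (f' (t + 1))))
          = ∏ t ∈ Finset.range m, (if σ t then A (f t) (f (t + 1)) / θ
            else C (f t) (f (t + 1))) := by
        refine Finset.prod_nbij' (fun t => (t + t₀) % m) (fun s => (s + (m - t₀)) % m)
          (fun a ha => Finset.mem_range.mpr (Nat.mod_lt _ hm0))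
          (fun a ha => Finset.mem_range.mpr (Nat.mod_lt _ hm0)) ?_ ?_ ?_
        · intro a ha
          show ((a + t₀) % m + (m - t₀)) % m = a
          rw [Nat.mod_add_mod, show a + t₀ + (m - t₀) = a + m by omega,
            Nat.add_mod_right, Nat.mod_eq_of_lt (Finset.mem_range.mp ha)]
        · intro a ha
          show ((a + (m - t₀)) % m + t₀) % m = a
          rw [Nat.mod_add_mod, show a + (m - t₀) + t₀ = a + m by omega,
            Nat.add_mod_right, Nat.mod_eq_of_lt (Finset.mem_range.mp ha)]
        · intro a ha
          simp only [hσ', hf', hnext a]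
      set T := (Finset.range m).filter (fun t => σ' t = true) with hT
      have hθsplit : (∏ t ∈ Finset.range m, (if σ' t then A (f' t) (f' (t + 1)) / θ
            else C (f' t) (f' (t + 1))))
          = (θ⁻¹) ^ T.card * ∏ t ∈ Finset.range m, (if σ' t then A (f' t) (f' (t + 1))
            else C (f' t) (f' (t + 1))) := by
        rw [← Finset.prod_filter_mul_prod_filter_not (Finset.range m)
            (fun t => σ' t = true)
            (fun t => if σ' t then A (f' t) (f' (t + 1)) / θ else C (f' t) (f' (t + 1))),
          ← Finset.prod_filter_mul_prod_filter_not (Finset.range m)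
            (fun t => σ' t = true)
            (fun t => if σ' t then A (f' t) (f' (t + 1)) else C (f' t) (f' (t + 1)))]
        have e1 : (∏ t ∈ T, (if σ' t then A (f' t) (f' (t + 1)) / θ
              else C (f' t) (f' (t + 1))))
            = (θ⁻¹) ^ T.card * ∏ t ∈ T, (if σ' t then A (f' t) (f' (t + 1))
              else C (f' t) (f' (t + 1))) := by
          calc (∏ t ∈ T, (if σ' t then A (f' t) (f' (t + 1)) / θ
                else C (f' t) (f' (t + 1))))
              = ∏ t ∈ T, (θ⁻¹ * (if σ' t then A (f' t) (f' (t + 1))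
                else C (f' t) (f' (t + 1)))) := by
                refine Finset.prod_congr rfl fun t ht => ?_
                have := (Finset.mem_filter.mp ht).2
                rw [if_pos this, if_pos this]
                field_simp
            _ = (∏ _t ∈ T, θ⁻¹) * ∏ t ∈ T, (if σ' t then A (f' t) (f' (t + 1))
                else C (f' t) (f' (t + 1))) := Finset.prod_mul_distrib
            _ = (θ⁻¹) ^ T.card * ∏ t ∈ T, (if σ' t then A (f' t) (f' (t + 1))
                else C (f' t) (f' (t + 1))) := by rw [Finset.prod_const]
        have e2 : (∏ t ∈ (Finset.range m).filter (fun t => ¬ σ' t = true),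
              (if σ' t then A (f' t) (f' (t +  1)) / θ else C (f' t) (f' (t + 1))))
            = ∏ t ∈ (Finset.range m).filter (fun t => ¬ σ' t = true),
              (if σ' t then A (f' t) (f' (t + 1)) else C (f' t) (f' (t + 1))) := by
          refine Finset.prod_congr rfl fun t ht => ?_
          have := (Finset.mem_filter.mp ht).2
          rw [if_neg this, if_neg this]
        rw [e1, e2]
        ring
      obtain ⟨k, g, hkpos, hsum, hcard, hbound⟩ := decomp hA hC m hm1 f' σ' hσ'0
      have hchain : mtChain A C k g (f' 0) (f' m) ≤ θ ^ k := by
        rw [hf'm]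
        exact hchainle k hkpos g (by omega) (f' 0)
      have hfinal : ptW S f m = (θ⁻¹) ^ k *
          ∏ t ∈ Finset.range m, (if σ' t then A (f' t) (f' (t + 1))
            else C (f' t) (f' (t + 1))) := by
        rw [hptWS, ← hrot, hθsplit, hcard]
      rw [hfinal]
      calc (θ⁻¹) ^ k * ∏ t ∈ Finset.range m, (if σ' t then A (f' t) (f' (t + 1))
            else C (f' t) (f' (t + 1)))
          ≤ (θ⁻¹) ^ k * θ ^ k := by
            refine mul_le_mul_of_nonneg_left (le_trans hbound hchain) ?_
            positivity
        _ = 1 := by rw [← mul_pow, inv_mul_cancel₀ hθne, one_pow]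
  obtain ⟨xs, hxs, hxsS⟩ := exists_subinvariant hn0 hS hcycS
  have hxsC : ∀ i, (⨆ j, C i j * xs j) ≤ xs i := by
    intro i
    refine ciSup_le fun j => ?_
    calc C i j * xs j ≤ S i j * xs j :=
          mul_le_mul_of_nonneg_right (le_max_right _ _) (le_of_lt (hxs j))
      _ ≤ ⨆ j', S i j' * xs j' :=
          le_ciSup (Set.Finite.bddAbove (Set.finite_range fun j' => S i j' * xs j')) j
      _ ≤ xs i := hxsS i
  have hμxs_le : μf xs ≤ θ := by
    refine ciSup_le fun p => ?_
    rw [div_le_iff₀ (hxs p.1)]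
    have h1 : A p.1 p.2 / θ * xs p.2 ≤ xs p.1 := by
      calc A p.1 p.2 / θ * xs p.2 ≤ S p.1 p.2 * xs p.2 :=
            mul_le_mul_of_nonneg_right (le_max_left _ _) (le_of_lt (hxs p.2))
        _ ≤ ⨆ j', S p.1 j' * xs j' :=
            le_ciSup (Set.Finite.bddAbove
              (Set.finite_range fun j' => S p.1 j' * xs j')) p.2
        _ ≤ xs p.1 := hxsS p.1
    calc A p.1 p.2 * xs p.2 = θ * (A p.1 p.2 / θ * xs p.2) := by field_simp
      _ ≤ θ * xs p.1 := mul_le_mul_of_nonneg_left h1 hθ0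
  have hμxs : μf xs = θ := le_antisymm hμxs_le (hLB xs hxs hxsC)
  constructor
  · exact ⟨xs, hxs, hxsC, hμxs.symm⟩
  · rintro y ⟨x, hx, hxC, rfl⟩
    exact hLB x hx hxC

end
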